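/- Let σ ∈ ℝ^d, ε > 0, and define W_ε(ρ) = Σ_{n=1}^d (σ_n ⟨n|ρ|n⟩ + (ε/4)(⟨n|ρ|n⟩)²). Then for every n ∈ {1,…,d}, the real function u ↦ W_ε(e^{−iuH} |n⟩⟨n| e^{iuH}) has vanishing first derivative at u = 0, and its second derivative at u = 0 equals −(R^H σ)_n + ε((⟨n|H|n⟩)² − ⟨n|H²|n⟩). -/

import Mathlib

open Matrix BigOperators

/-- `U_u = e^{−iuH}`, the matrix exponential of `−iuH`. -/
noncomputable def Uu {d : ℕ} (H : Matrix (Fin d) (Fin d) ℂ) (u : ℝ) :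
    Matrix (Fin d) (Fin d) ℂ :=
  NormedSpace.exp ((-(Complex.I * (u : ℂ))) • H)

/-- The Laplacian matrix `R^H` with entries
`R^H_{n₁,n₂} = 2(δ_{n₁,n₂}⟨n₁|H²|n₂⟩ − |⟨n₁|H|n₂⟩|²)`. -/
noncomputable def RH {d : ℕ} (H : Matrix (Fin d) (Fin d) ℂ) : Matrix (Fin d) (Fin d) ℝ :=
  Matrix.of fun n₁ n₂ =>
    2 * ((if n₁ = n₂ then ((H * H) n₁ n₂).re else 0) - Complex.normSq (H n₁ n₂))

/-- `W_ε(ρ) = Σ_n (σ_n ⟨n|ρ|n⟩ + (ε/4)(⟨n|ρ|n⟩)²)`. -/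
noncomputable def Weps {d : ℕ} (σ : Fin d → ℝ) (ε : ℝ)
    (ρ : Matrix (Fin d) (Fin d) ℂ) : ℝ :=
  ∑ k, (σ k * (ρ k k).re + (ε / 4) * (ρ k k).re ^ 2)

attribute [local instance] Matrix.linftyOpNormedRing Matrix.linftyOpNormedAlgebra

noncomputable def entryCLM (d : ℕ) (k l : Fin d) : Matrix (Fin d) (Fin d) ℂ →L[ℝ] ℂ :=
  LinearMap.toContinuousLinearMap
    { toFun := fun M => M k l
      map_add' := fun _ _ => rfl
      map_smul' := fun _ _ => rfl }

lemma hasDerivAt_entry {d : ℕ} {F : ℝ → Matrix (Fin d) (Fin d) ℂ}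
    {F' : Matrix (Fin d) (Fin d) ℂ} {u : ℝ} (h : HasDerivAt F F' u) (k l : Fin d) :
    HasDerivAt (fun v => F v k l) (F' k l) u :=
  (entryCLM d k l).hasFDerivAt.comp_hasDerivAt u h

lemma hasDerivAt_re' {f : ℝ → ℂ} {f' : ℂ} {u : ℝ} (h : HasDerivAt f f' u) :
    HasDerivAt (fun v => (f v).re) f'.re u :=
  Complex.reCLM.hasFDerivAt.comp_hasDerivAt u h

lemma hasDerivAt_im' {f : ℝ → ℂ} {f' : ℂ} {u : ℝ} (h : HasDerivAt f f' u) :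
    HasDerivAt (fun v => (f v).im) f'.im u :=
  Complex.imCLM.hasFDerivAt.comp_hasDerivAt u h

lemma Uu_hasDerivAt {d : ℕ} (H : Matrix (Fin d) (Fin d) ℂ) (u : ℝ) :
    HasDerivAt (fun v : ℝ => Uu H v) (Uu H u * ((-Complex.I) • H)) u := by
  have h1 : ∀ v : ℝ, Uu H v = NormedSpace.exp (v • ((-Complex.I) • H)) := by
    intro v
    rw [Uu]
    congr 1
    rw [← algebraMap_smul ℂ v ((-Complex.I) • H), smul_smul, Complex.coe_algebraMap]
    congr 1
    ring
  simp_rw [h1]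
  exact hasDerivAt_exp_smul_const _ u

lemma Uu_zero {d : ℕ} (H : Matrix (Fin d) (Fin d) ℂ) : Uu H 0 = 1 := by
  simp [Uu, NormedSpace.exp_zero]

lemma aux_entry {d : ℕ} (U : Matrix (Fin d) (Fin d) ℂ) (n k : Fin d) :
    (U * Matrix.single n n (1:ℂ) * Uᴴ : Matrix (Fin d) (Fin d) ℂ) k k
      = U k n * star (U k n) := by
  simp [Matrix.mul_apply, Matrix.single, Matrix.conjTranspose_apply,
    Matrix.of_apply, ite_and, Finset.sum_ite_eq, Finset.sum_ite_eq']

lemma aux_re_sq {z : ℂ} : (z * star z).re = z.re ^ 2 + z.im ^ 2 := by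
  simp [Complex.mul_re, Complex.star_def]
  ring

/-- the diagonal weight `⟨k|ρ(u)|k⟩` as a function of `u`. -/
noncomputable def SS {d : ℕ} (H : Matrix (Fin d) (Fin d) ℂ) (n k : Fin d) (u : ℝ) : ℝ :=
  (Uu H u k n).re ^ 2 + (Uu H u k n).im ^ 2

noncomputable def DD {d : ℕ} (H : Matrix (Fin d) (Fin d) ℂ) (n k : Fin d) (u : ℝ) : ℝ :=
  2 * ((Uu H u k n).re * ((Uu H u * (-Complex.I) • H : Matrix (Fin d) (Fin d) ℂ) k n).re
     + (Uu H u k n).im * ((Uu H u * (-Complex.I) • H : Matrix (Fin d) (Fin d) ℂ) k n).im)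

lemma SS_hasDerivAt {d : ℕ} (H : Matrix (Fin d) (Fin d) ℂ) (n k : Fin d) (u : ℝ) :
    HasDerivAt (SS H n k) (DD H n k u) u := by
  have h1 : HasDerivAt (fun v : ℝ => Uu H v k n)
      ((Uu H u * ((-Complex.I) • H) : Matrix (Fin d) (Fin d) ℂ) k n) u :=
    hasDerivAt_entry (Uu_hasDerivAt H u) k n
  have h := ((hasDerivAt_re' h1).pow 2).add ((hasDerivAt_im' h1).pow 2)
  unfold SS DD
  refine h.congr_deriv (Eq.symm ?_)
  push_cast
  ring

lemma DD_hasDerivAt {d : ℕ} (H : Matrix (Fin d) (Fin d) ℂ) (n k : Fin d) (u : ℝ) :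
    HasDerivAt (DD H n k)
      (2 * (((Uu H u * ((-Complex.I) • H) : Matrix (Fin d) (Fin d) ℂ) k n).re ^ 2
          + ((Uu H u * ((-Complex.I) • H) : Matrix (Fin d) (Fin d) ℂ) k n).im ^ 2
          + (Uu H u k n).re
            * ((Uu H u * ((-Complex.I) • H) * ((-Complex.I) • H)
                : Matrix (Fin d) (Fin d) ℂ) k n).re
          + (Uu H u k n).im
            * ((Uu H u * ((-Complex.I) • H) * ((-Complex.I) • H)
                : Matrix (Fin d) (Fin d) ℂ) k n).im)) u := by
  have h1 : HasDerivAt (fun v : ℝ => Uu H v k n)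
      ((Uu H u * ((-Complex.I) • H) : Matrix (Fin d) (Fin d) ℂ) k n) u :=
    hasDerivAt_entry (Uu_hasDerivAt H u) k n
  have h2 : HasDerivAt (fun v : ℝ => (Uu H v * ((-Complex.I) • H)
        : Matrix (Fin d) (Fin d) ℂ) k n)
      ((Uu H u * ((-Complex.I) • H) * ((-Complex.I) • H)
        : Matrix (Fin d) (Fin d) ℂ) k n) u :=
    hasDerivAt_entry ((Uu_hasDerivAt H u).mul_const _) k n
  have h := ((((hasDerivAt_re' h1).mul (hasDerivAt_re' h2)).add
      ((hasDerivAt_im' h1).mul (hasDerivAt_im' h2))).const_mul 2)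
  unfold DD
  refine h.congr_deriv (Eq.symm ?_)
  ring

/-- for any `σ ∈ ℝ^d`, `ε > 0` and any `n`, the real function
`u ↦ W_ε(e^{−iuH}|n⟩⟨n|e^{iuH})` has vanishing first derivative at `u = 0` and second
derivative at `u = 0` equal to `−(R^H σ)_n + ε((⟨n|H|n⟩)² − ⟨n|H²|n⟩)`. -/
theorem stmt_14 (d : ℕ) (hd : 1 ≤ d) (H : Matrix (Fin d) (Fin d) ℂ)
    (hH : H.IsHermitian) (σ : Fin d → ℝ) (ε : ℝ) (hε : 0 < ε) (n : Fin d) :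
    HasDerivAt
      (fun u : ℝ => Weps σ ε (Uu H u * Matrix.single n n 1 * (Uu H u)ᴴ))
      0 0 ∧
    HasDerivAt
      (deriv (fun u : ℝ =>
        Weps σ ε (Uu H u * Matrix.single n n 1 * (Uu H u)ᴴ)))
      (-((RH H).mulVec σ n) + ε * ((H n n).re ^ 2 - ((H * H) n n).re)) 0 := by
  classical
  -- diagonal of H is real
  have him : (H n n).im = 0 := by
    have h0 : star (H n n) = H n n := by
      conv_rhs => rw [← hH, Matrix.conjTranspose_apply]
    exact Complex.conj_eq_iff_im.mp h0
  -- A² = -(H*H)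
  have hAA : ((-Complex.I) • H) * ((-Complex.I) • H) = -(H * H) := by
    rw [Algebra.smul_mul_assoc, Algebra.mul_smul_comm, smul_smul]
    norm_num [Complex.I_mul_I]
  -- RH symmetry
  have hRHsym : ∀ a b : Fin d, RH H a b = RH H b a := by
    intro a b
    have h0 : H a b = star (H b a) := by rw [← Matrix.conjTranspose_apply, hH]
    simp only [RH, Matrix.of_apply]
    by_cases hab : a = b
    · subst hab; rfl
    · rw [if_neg hab, if_neg (Ne.symm hab), h0]
      simp [Complex.normSq_apply, Complex.star_def]
  -- rewrite the function
  have hfun : (fun u : ℝ => Weps σ ε (Uu H u * Matrix.single n n 1 * (Uu H u)ᴴ))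
      = fun u : ℝ => ∑ k, (σ k * SS H n k u + (ε / 4) * SS H n k u ^ 2) := by
    funext u
    unfold Weps
    refine Finset.sum_congr rfl fun k _ => ?_
    rw [show ((Uu H u * Matrix.single n n 1 * (Uu H u)ᴴ : Matrix (Fin d) (Fin d) ℂ) k k)
        = Uu H u k n * star (Uu H u k n) from aux_entry (Uu H u) n k, aux_re_sq]
    rfl
  -- derivative at every point
  have hW : ∀ u : ℝ, HasDerivAt (fun v : ℝ => ∑ k, (σ k * SS H n k v + (ε / 4) * SS H n k v ^ 2))
      (∑ k, (σ k + (ε / 2) * SS H n k u) * DD H n k u) u := by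
    intro u
    have h := HasDerivAt.fun_sum (fun k (_ : k ∈ Finset.univ) =>
      (((SS_hasDerivAt H n k u).const_mul (σ k)).add
        (((SS_hasDerivAt H n k u).pow 2).const_mul (ε / 4))))
    refine h.congr_deriv (Eq.symm ?_)
    refine Finset.sum_congr rfl fun k _ => ?_
    push_cast
    ring
  -- DD vanishes at 0
  have hDD0 : ∀ k : Fin d, DD H n k 0 = 0 := by
    intro k
    unfold DD
    simp only [Uu_zero, one_mul]
    by_cases hk : k = n
    · subst hk
      simp [Matrix.one_apply_eq, Matrix.smul_apply, smul_eq_mul, Complex.mul_re,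
        Complex.mul_im, him]
    · simp [Matrix.one_apply_ne hk]
  constructor
  · rw [hfun]
    have h := hW 0
    have hz : (∑ k, (σ k + (ε / 2) * SS H n k 0) * DD H n k 0) = 0 := by
      refine Finset.sum_eq_zero fun k _ => ?_
      rw [hDD0 k, mul_zero]
    rwa [hz] at h
  · have hderiv : deriv (fun u : ℝ =>
        Weps σ ε (Uu H u * Matrix.single n n 1 * (Uu H u)ᴴ))
        = fun u : ℝ => ∑ k, (σ k + (ε / 2) * SS H n k u) * DD H n k u := by
      rw [hfun]
      funext u
      exact (hW u).deriv
    rw [hderiv]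
    -- termwise derivative at 0
    have hterm : ∀ k : Fin d, HasDerivAt (fun u : ℝ => (σ k + (ε / 2) * SS H n k u) * DD H n k u)
        (σ k * (-(RH H k n)) + (if k = n then ε * ((H n n).re ^ 2 - ((H * H) n n).re) else 0))
        0 := by
      intro k
      have h1 : HasDerivAt (fun u : ℝ => σ k + (ε / 2) * SS H n k u)
          ((ε / 2) * DD H n k 0) 0 :=
        ((SS_hasDerivAt H n k 0).const_mul (ε / 2)).const_add (σ k)
      have h := h1.mul (DD_hasDerivAt H n k 0)
      refine h.congr_deriv (Eq.symm ?_)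
      rw [hDD0 k]
      simp only [SS, DD, Uu_zero, one_mul, hAA, RH, Matrix.of_apply,
        Matrix.smul_apply, smul_eq_mul, Matrix.neg_apply, Complex.neg_re, Complex.neg_im,
        Complex.mul_re, Complex.mul_im, Complex.neg_re, Complex.I_re, Complex.I_im,
        Complex.normSq_apply]
      by_cases hk : k = n
      · subst hk
        simp only [if_pos rfl, eq_self_iff_true, if_true, Matrix.one_apply_eq,
          Complex.one_re, Complex.one_im, him]
        ring
      · simp only [if_neg hk, Matrix.one_apply_ne hk, Complex.zero_re, Complex.zero_im]
        ring
    have hsum := HasDerivAt.fun_sum (fun k (_ : k ∈ Finset.univ) => hterm k)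
    refine hsum.congr_deriv (Eq.symm ?_)
    rw [Finset.sum_add_distrib, Finset.sum_ite_eq' Finset.univ n
      (fun _ => ε * ((H n n).re ^ 2 - ((H * H) n n).re)), if_pos (Finset.mem_univ n)]
    have hmv : ((RH H).mulVec σ) n = ∑ k, RH H n k * σ k := by
      simp [Matrix.mulVec, dotProduct]
    rw [hmv]
    rw [show -(∑ k, RH H n k * σ k) = ∑ k, σ k * (-(RH H k n)) by
      rw [← Finset.sum_neg_distrib]
      exact Finset.sum_congr rfl fun k _ => by rw [hRHsym n k]; ring]
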